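/- If a permutation π of [n] has no alignments, then π is the rotation i ↦ i + r (mod n) for some fixed r; consequently its Grassmann necklace is the necklace of cyclic intervals N_i = [i, i+r). -/

import Mathlib

open Finset

variable {n : ℕ}

/-- Position of `x` in the cyclic order on `Fin n` starting at `i`. -/
def cpos (i x : Fin n) : ℕ := ((x - i : Fin n) : ℕ)

/-- `X ≪_i Y`: every element of `X \\ Y` precedes every element of `Y \\ X`
in the cyclic order starting at `i`. -/
def Ll (i : Fin n) (X Y : Finset (Fin n)) : Prop :=
  ∀ x ∈ X \ Y, ∀ y ∈ Y \ X, cpos i x < cpos i y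

/-- `X` and `Y` are weakly separated. -/
def WSep (X Y : Finset (Fin n)) : Prop := ∃ i : Fin n, Ll i X Y

/-- The Grassmann necklace associated with a permutation `π`:
`N_i = { k : k ≤_i π⁻¹(k) }`. -/
def necklaceOf (π : Equiv.Perm (Fin n)) (i : Fin n) : Finset (Fin n) :=
  Finset.univ.filter fun k => cpos i k ≤ cpos i (π.symm k)

/-- `(i, j)` is an alignment of `π`: the quadruple `π⁻¹(i), i, j, π⁻¹(j)`
occurs in this cyclic order (`j = π(j)` allowed, `i = π(i)` not). -/
def IsAlignment (π : Equiv.Perm (Fin n)) (i j : Fin n) : Prop :=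
  0 < cpos (π.symm i) i ∧
  cpos (π.symm i) i < cpos (π.symm i) j ∧
  cpos (π.symm i) j ≤ cpos (π.symm i) (π.symm j)


lemma mod_resolve {n a : ℕ} (h : a < 2 * n) :
    a % n = a ∧ a < n ∨ a % n = a - n ∧ n ≤ a := by
  rcases lt_or_ge a n with h1 | h1
  · exact Or.inl ⟨Nat.mod_eq_of_lt h1, h1⟩
  · refine Or.inr ⟨?_, h1⟩
    rw [Nat.mod_eq_sub_mod h1, Nat.mod_eq_of_lt (by omega)]

lemma cpos_lt [NeZero n] (i x : Fin n) : cpos i x < n := (x - i).isLt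
lemma cpos_eq_zero [NeZero n] {i x : Fin n} (h : cpos i x = 0) : x = i := by
  have h0 : x - i = 0 := Fin.val_injective (by rw [Fin.val_zero]; exact h)
  exact sub_eq_zero.mp h0
lemma cpos_self [NeZero n] (i : Fin n) : cpos i i = 0 := by simp [cpos]
lemma cpos_inj [NeZero n] {i x y : Fin n} (h : cpos i x = cpos i y) : x = y := by
  have h0 : x - i = y - i := Fin.val_injective h
  exact sub_left_injective h0
open Fin.CommRing in
lemma cpos_chain [NeZero n] (a x y : Fin n) : cpos a y = (cpos a x + cpos x y) % n := by
  have h0 : y - a = (x - a) + (y - x) := by ring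
  rw [cpos, h0, Fin.val_add]; rfl
lemma cpos_total [NeZero n] {a b : Fin n} (hab : b ≠ a) : cpos a b + cpos b a = n := by
  have h0 : cpos a a = (cpos a b + cpos b a) % n := cpos_chain a b a
  rw [cpos_self] at h0
  have h1 : cpos a b ≠ 0 := fun hc => hab (cpos_eq_zero hc)
  have h2 := cpos_lt a b
  have h3 := cpos_lt b a
  rcases mod_resolve (n := n) (a := cpos a b + cpos b a) (by omega) with ⟨e1,e2⟩|⟨e1,e2⟩ <;> omega

lemma keyK [NeZero n] (π : Equiv.Perm (Fin n)) (h : ∀ i j : Fin n, ¬ IsAlignment π i j)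
    {i j : Fin n} (h1 : 0 < cpos (π.symm i) i) (h2 : cpos (π.symm i) i < cpos (π.symm i) j) :
    0 < cpos (π.symm j) j ∧ cpos (π.symm j) j ≤ cpos (π.symm i) j := by
  have hna := h i j
  rw [IsAlignment] at hna
  push_neg at hna
  have h3 : cpos (π.symm i) (π.symm j) < cpos (π.symm i) j := hna h1 h2
  have hc := cpos_chain (π.symm i) (π.symm j) j
  have b1 := cpos_lt (π.symm i) (π.symm j)
  have b2 := cpos_lt (π.symm j) j
  have b3 := cpos_lt (π.symm i) j
  rcases mod_resolve (n := n) (a := cpos (π.symm i) (π.symm j) + cpos (π.symm j) j) (by omega) with ⟨e1,e2⟩|⟨e1,e2⟩ <;> omega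

lemma noFixed [NeZero n] (π : Equiv.Perm (Fin n)) (h : ∀ i j : Fin n, ¬ IsAlignment π i j)
    (hπ : π ≠ 1) (k : Fin n) : π k ≠ k := by
  intro hk
  obtain ⟨i0, hi0⟩ : ∃ x, π x ≠ x := by
    by_contra hc; push_neg at hc; exact hπ (Equiv.ext hc)
  set S := univ.filter (fun x : Fin n => π x ≠ x) with hSdef
  have hS : S.Nonempty := ⟨i0, by simp [hSdef, hi0]⟩
  obtain ⟨j, hjS, hjmax⟩ := S.exists_max_image (fun x => cpos k x) hS
  have hj : π j ≠ j := by simpa [hSdef] using hjS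
  set b := π.symm j with hbdef
  have hπb : π b = j := by simp [hbdef]
  have hbj : b ≠ j := fun hc => hj (hc ▸ hπb)
  have hkj : k ≠ j := fun hc => hj (hc ▸ hk)
  have hdj : 0 < cpos b j :=
    Nat.pos_of_ne_zero (fun h0 => (Ne.symm hbj) (cpos_eq_zero h0))
  have hdk : cpos (π.symm k) k = 0 := by
    rw [(Equiv.symm_apply_eq π).mpr hk.symm, cpos_self]
  have hK : cpos b k ≤ cpos b j := by
    by_contra hc
    push_neg at hc
    have := keyK π h (i := j) (j := k) hdj (by rw [← hbdef]; exact hc)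
    omega
  have hkb : k ≠ b := by
    intro hc
    rw [← hc] at hπb
    rw [hk] at hπb
    exact hkj hπb
  have hne : cpos b k ≠ cpos b j := fun hc => hkj (cpos_inj hc)
  have hlt : cpos b k < cpos b j := lt_of_le_of_ne hK hne
  have hbS : b ∈ S := by
    simp only [hSdef, mem_filter, mem_univ, true_and]
    intro hc
    exact hbj (hπb.symm.trans hc).symm
  have hmax := hjmax b hbS
  have hch : cpos k j = (cpos k b + cpos b j) % n := cpos_chain k b j
  have htot : cpos b k + cpos k b = n := cpos_total hkb
  have b1 := cpos_lt k b
  have b2 := cpos_lt b j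
  rcases mod_resolve (n := n) (a := cpos k b + cpos b j) (by omega) with ⟨e1,e2⟩|⟨e1,e2⟩ <;> omega

open Fin.NatCast Fin.CommRing in
lemma rotationAux [NeZero n] (π : Equiv.Perm (Fin n)) (h : ∀ i j : Fin n, ¬ IsAlignment π i j)
    (hπ : π ≠ 1) :
    ∃ M : ℕ, 0 < M ∧ M < n ∧ ∀ x : Fin n, cpos (π.symm x) x = M := by
  have hnf : ∀ k, π k ≠ k := noFixed π h hπ
  have hd0 : ∀ x : Fin n, 0 < cpos (π.symm x) x := by
    intro x
    refine Nat.pos_of_ne_zero (fun h0 => ?_)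
    have hx : x = π.symm x := cpos_eq_zero h0
    exact hnf x (by simpa using congrArg π hx)
  obtain ⟨i, -, hmax⟩ := univ.exists_max_image (fun x : Fin n => cpos (π.symm x) x)
    univ_nonempty
  refine ⟨cpos (π.symm i) i, hd0 i, cpos_lt _ _, ?_⟩
  -- Step A : points before i (from base π.symm i) move forward
  have hA : ∀ x : Fin n, cpos (π.symm i) x < cpos (π.symm i) i →
      cpos (π.symm i) x < cpos (π.symm i) (π.symm x) := by
    intro x hu
    by_contra hs
    push_neg at hs
    have hxi : x ≠ i := by intro hc; rw [hc] at hu; omega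
    have hsne : cpos (π.symm i) (π.symm x) ≠ cpos (π.symm i) x := by
      intro hc
      exact hnf x (by simpa using (congrArg π (cpos_inj hc)).symm)
    have hslt : cpos (π.symm i) (π.symm x) < cpos (π.symm i) x := lt_of_le_of_ne hs hsne
    have hch : cpos (π.symm i) x
        = (cpos (π.symm i) (π.symm x) + cpos (π.symm x) x) % n := cpos_chain _ _ _
    have be := cpos_lt (π.symm x) x
    have bs := cpos_lt (π.symm i) (π.symm x)
    have heq : cpos (π.symm x) x = cpos (π.symm i) x - cpos (π.symm i) (π.symm x) ∧
        cpos (π.symm i) (π.symm x) + cpos (π.symm x) x < n := by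
      rcases mod_resolve (n := n)
        (a := cpos (π.symm i) (π.symm x) + cpos (π.symm x) x) (by omega) with
        ⟨e1,e2⟩|⟨e1,e2⟩ <;> omega
    have hs0 : cpos (π.symm i) (π.symm x) ≠ 0 := by
      intro h0
      exact hxi (π.symm.injective (cpos_eq_zero h0))
    have hne' : π.symm x ≠ π.symm i := by
      intro hc
      exact hs0 (by rw [hc, cpos_self])
    have htot : cpos (π.symm i) (π.symm x) + cpos (π.symm x) (π.symm i) = n :=
      cpos_total hne'
    have hchi : cpos (π.symm x) i
        = (cpos (π.symm x) (π.symm i) + cpos (π.symm i) i) % n := cpos_chain _ _ _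
    have hval : cpos (π.symm x) i = cpos (π.symm i) i - cpos (π.symm i) (π.symm x) := by
      rcases mod_resolve (n := n)
        (a := cpos (π.symm x) (π.symm i) + cpos (π.symm i) i)
        (by have := cpos_lt (π.symm x) (π.symm i); have := cpos_lt (π.symm i) i; omega) with
        ⟨e1,e2⟩|⟨e1,e2⟩ <;> omega
    have hK := keyK π h (i := x) (j := i) (hd0 x) (by rw [hval]; omega)
    rw [hval] at hK
    omega
  -- counting
  have hid : ∀ x : Fin n, cpos (π.symm x) x + cpos (π.symm i) (π.symm x)
      = cpos (π.symm i) x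
        + n * (if cpos (π.symm i) x < cpos (π.symm i) (π.symm x) then 1 else 0) := by
    intro x
    have hch : cpos (π.symm i) x
        = (cpos (π.symm i) (π.symm x) + cpos (π.symm x) x) % n := cpos_chain _ _ _
    have b1 := cpos_lt (π.symm i) (π.symm x)
    have b2 := cpos_lt (π.symm x) x
    rcases mod_resolve (n := n)
      (a := cpos (π.symm i) (π.symm x) + cpos (π.symm x) x) (by omega) with
      ⟨e1,e2⟩|⟨e1,e2⟩ <;> split_ifs <;> omega
  have hsum1 : (∑ x : Fin n, cpos (π.symm x) x) + ∑ x : Fin n, cpos (π.symm i) (π.symm x)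
      = (∑ x : Fin n, cpos (π.symm i) x)
        + n * (univ.filter fun x : Fin n =>
            cpos (π.symm i) x < cpos (π.symm i) (π.symm x)).card := by
    rw [Finset.card_filter, Finset.mul_sum, ← Finset.sum_add_distrib,
      ← Finset.sum_add_distrib]
    exact Finset.sum_congr rfl (fun x _ => hid x)
  have hre : ∑ x : Fin n, cpos (π.symm i) (π.symm x) = ∑ x : Fin n, cpos (π.symm i) x :=
    Equiv.sum_comp π.symm (fun y => cpos (π.symm i) y)
  have hSig : (∑ x : Fin n, cpos (π.symm x) x)
      = n * (univ.filter fun x : Fin n =>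
          cpos (π.symm i) x < cpos (π.symm i) (π.symm x)).card := by
    rw [hre] at hsum1
    linarith
  -- card of the "early" set is M
  have hcard : (univ.filter fun x : Fin n =>
      cpos (π.symm i) x < cpos (π.symm i) i).card = cpos (π.symm i) i := by
    have hbij : (univ.filter fun x : Fin n =>
        cpos (π.symm i) x < cpos (π.symm i) i).card
        = (Finset.range (cpos (π.symm i) i)).card := by
      apply Finset.card_nbij' (i := fun x => cpos (π.symm i) x)
        (j := fun m => π.symm i + (m : Fin n))
      · intro x hx
        simp only [Finset.mem_coe, mem_filter, mem_univ, true_and] at hx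
        simpa using hx
      · intro m hm
        simp only [Finset.mem_coe, Finset.mem_range] at hm
        have hMn := cpos_lt (π.symm i) i
        simp only [Finset.mem_coe, mem_filter, mem_univ, true_and]
        have hcm : cpos (π.symm i) (π.symm i + (m : Fin n)) = m := by
          unfold cpos
          rw [add_sub_cancel_left, Fin.val_natCast, Nat.mod_eq_of_lt (by omega)]
        omega
      · intro x hx
        show π.symm i + ((cpos (π.symm i) x : ℕ) : Fin n) = x
        unfold cpos
        rw [Fin.cast_val_eq_self]
        ring
      · intro m hm
        simp only [Finset.mem_coe, Finset.mem_range] at hm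
        have hMn := cpos_lt (π.symm i) i
        show cpos (π.symm i) (π.symm i + (m : Fin n)) = m
        unfold cpos
        rw [add_sub_cancel_left, Fin.val_natCast, Nat.mod_eq_of_lt (by omega)]
    rw [hbij, Finset.card_range]
  have hsubset : (univ.filter fun x : Fin n => cpos (π.symm i) x < cpos (π.symm i) i)
      ⊆ (univ.filter fun x : Fin n => cpos (π.symm i) x < cpos (π.symm i) (π.symm x)) := by
    intro x hx
    simp only [mem_filter, mem_univ, true_and] at hx ⊢
    exact hA x hx
  have hWge : cpos (π.symm i) i ≤ (univ.filter fun x : Fin n =>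
      cpos (π.symm i) x < cpos (π.symm i) (π.symm x)).card := by
    rw [← hcard]; exact Finset.card_le_card hsubset
  have hub : (∑ x : Fin n, cpos (π.symm x) x) ≤ n * cpos (π.symm i) i := by
    calc (∑ x : Fin n, cpos (π.symm x) x) ≤ univ.card • cpos (π.symm i) i :=
          Finset.sum_le_card_nsmul univ _ _ (fun x _ => hmax x (mem_univ x))
      _ = n * cpos (π.symm i) i := by
          rw [Finset.card_univ, Fintype.card_fin, smul_eq_mul]
  have hSeq : (∑ x : Fin n, cpos (π.symm x) x) = n * cpos (π.symm i) i := by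
    have h2 := Nat.mul_le_mul_left n hWge
    linarith
  intro x
  by_contra hne
  have hlt : cpos (π.symm x) x < cpos (π.symm i) i :=
    lt_of_le_of_ne (hmax x (mem_univ x)) hne
  have : (∑ y : Fin n, cpos (π.symm y) y) < ∑ _y : Fin n, cpos (π.symm i) i :=
    Finset.sum_lt_sum (fun y _ => hmax y (mem_univ y)) ⟨x, mem_univ x, hlt⟩
  rw [Finset.sum_const, Finset.card_univ, Fintype.card_fin, smul_eq_mul] at this
  linarith

open Fin.NatCast in
/-- A permutation with no alignments is the rotation `i ↦ i + r`, and its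
necklace is the necklace of cyclic intervals `N_i = [i, i + r)`. -/
theorem no_alignment_rotation [NeZero n] (π : Equiv.Perm (Fin n))
    (h : ∀ i j : Fin n, ¬ IsAlignment π i j) :
    ∃ r : ℕ, 0 < r ∧ r ≤ n ∧ (∀ i : Fin n, π i = i + (r : Fin n)) ∧
      ∀ i : Fin n, necklaceOf π i = Finset.univ.filter fun x => cpos i x < r := by
  by_cases hπ : π = 1
  · refine ⟨n, NeZero.pos n, le_refl n, ?_, ?_⟩
    · intro i
      subst hπ
      simp [Fin.natCast_self]
    · intro i
      subst hπ
      ext k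
      simp [necklaceOf, cpos_lt i k, Equiv.Perm.one_symm]
  · obtain ⟨M, hM0, hMn, hd⟩ := rotationAux π h hπ
    have hsymm : ∀ x : Fin n, π.symm x = x - (M : Fin n) := by
      intro x
      have h1 : x - π.symm x = (M : Fin n) := by
        apply Fin.val_injective
        rw [Fin.val_natCast, Nat.mod_eq_of_lt hMn]
        exact hd x
      open Fin.CommRing in linear_combination (-1 : Fin n) * h1
    refine ⟨M, hM0, le_of_lt hMn, ?_, ?_⟩
    · intro i
      have h2 := hsymm (i + (M : Fin n))
      have h3 : i + (M : Fin n) - (M : Fin n) = i := by open Fin.CommRing in ring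
      rw [h3] at h2
      have h4 := π.apply_symm_apply (i + (M : Fin n))
      rw [h2] at h4
      exact h4
    · intro i
      ext k
      simp only [necklaceOf, mem_filter, mem_univ, true_and]
      have hch : cpos i k = (cpos i (π.symm k) + cpos (π.symm k) k) % n :=
        cpos_chain i (π.symm k) k
      rw [hd k] at hch
      have b1 := cpos_lt i (π.symm k)
      have b2 := cpos_lt i k
      rcases mod_resolve (n := n) (a := cpos i (π.symm k) + M) (by omega) with
        ⟨e1,e2⟩|⟨e1,e2⟩ <;> omega
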